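/- For odd n = 2k+1 with k ≥ 2 and the weights of the large-volume construction (a_0=a_1=a_2=1, a_{2i-1}=h/(2s_{k+1-i}), a_{2i}=h/s_{k+1-i} for 2 ≤ i ≤ k-1, a_{n-2}=h/6, a_{n-1}=h/4, a_n=h/3, h = 2(s_k - 1)), the quotient h^n / (a_0 a_1 ⋯ a_n) equals 2^{(n+1)/2} (s_{(n-1)/2} - 1)^4. -/
import Mathlib


def sylvester : ℕ → ℕ
  | 0 => 2
  | n + 1 => sylvester n * (sylvester n - 1) + 1

lemma sylvester_two_le (n : ℕ) : 2 ≤ sylvester n := by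
  induction n with
  | zero => simp [sylvester]
  | succ n ih =>
    show 2 ≤ sylvester n * (sylvester n - 1) + 1
    have : 2 * 1 ≤ sylvester n * (sylvester n - 1) := Nat.mul_le_mul ih (by omega)
    omega

lemma sylvester_sub_one (k : ℕ) :
    sylvester k - 1 = ∏ j ∈ Finset.range k, sylvester j := by
  induction k with
  | zero => simp [sylvester]
  | succ k ih =>
    rw [Finset.prod_range_succ, ← ih]
    show sylvester k * (sylvester k - 1) + 1 - 1 = _
    rw [Nat.add_sub_cancel, Nat.mul_comm]

lemma sylvester_dvd_sub_one {j k : ℕ} (hjk : j < k) :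
    sylvester j ∣ sylvester k - 1 := by
  rw [sylvester_sub_one]
  exact Finset.dvd_prod_of_mem _ (Finset.mem_range.2 hjk)

lemma prod_range_two_mul (f : ℕ → ℕ) (m : ℕ) :
    ∏ j ∈ Finset.range (2 * m), f j
      = ∏ t ∈ Finset.range m, (f (2 * t) * f (2 * t + 1)) := by
  induction m with
  | zero => simp
  | succ m ih =>
    rw [show 2 * (m + 1) = 2 * m + 1 + 1 by ring, Finset.prod_range_succ,
      Finset.prod_range_succ, ih, Finset.prod_range_succ]
    ring

theorem large_volume_value (k : ℕ) (hk : 2 ≤ k)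
    (n : ℕ) (hn : n = 2 * k + 1)
    (h : ℕ) (hh : h = 2 * (sylvester k - 1))
    (a : ℕ → ℕ)
    (ha012 : ∀ j ≤ 2, a j = 1)
    (haodd : ∀ i, 2 ≤ i → i ≤ k - 1 → a (2 * i - 1) = h / (2 * sylvester (k + 1 - i)))
    (haeven : ∀ i, 2 ≤ i → i ≤ k - 1 → a (2 * i) = h / sylvester (k + 1 - i))
    (han2 : a (n - 2) = h / 6)
    (han1 : a (n - 1) = h / 4)
    (han : a n = h / 3) :
    h ^ n / (∏ j ∈ Finset.range (n + 1), a j)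
      = 2 ^ ((n + 1) / 2) * (sylvester ((n - 1) / 2) - 1) ^ 4 := by
  obtain ⟨m, rfl⟩ : ∃ m, k = m + 2 := ⟨k - 2, by omega⟩
  subst hn hh
  -- abbreviation
  set P : ℕ := ∏ t ∈ Finset.range m, sylvester (t + 2) with hPdef
  have hP : sylvester (m + 2) - 1 = 6 * P := by
    rw [sylvester_sub_one, show m + 2 = 2 + m by omega, Finset.prod_range_add]
    simp only [hPdef]
    rw [show (∏ j ∈ Finset.range 2, sylvester j) = 6 by decide]
    congr 1
    exact Finset.prod_congr rfl fun t _ => by rw [Nat.add_comm]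
  set H : ℕ := 2 * (sylvester (m + 2) - 1) with hHdef
  have hH12 : H = 12 * P := by rw [hHdef, hP]; ring
  have hPpos : 0 < P := Finset.prod_pos fun t _ => by
    have := sylvester_two_le (t + 2); omega
  have hHpos : 0 < H := by omega
  -- the three last weights
  have e2 : 2 * (m + 2) + 1 - 2 = 2 * m + 3 := by omega
  have e1 : 2 * (m + 2) + 1 - 1 = 2 * m + 4 := by omega
  have e0 : 2 * (m + 2) + 1 = 2 * m + 5 := by omega
  rw [e2] at han2; rw [e1] at han1; rw [e0] at han
  rw [e0]
  -- pair terms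
  have pairval : ∀ t < m,
      a (2 * t + 3) * a (2 * t + 4) * (2 * sylvester (m + 1 - t) ^ 2) = H ^ 2 := by
    intro t ht
    have h2 : (2 : ℕ) ≤ t + 2 := by omega
    have h3 : t + 2 ≤ m + 2 - 1 := by omega
    have ho := haodd (t + 2) h2 h3
    have he := haeven (t + 2) h2 h3
    have eidx : m + 2 + 1 - (t + 2) = m + 1 - t := by omega
    rw [eidx] at ho he
    rw [show 2 * (t + 2) - 1 = 2 * t + 3 by omega] at ho
    rw [show 2 * (t + 2) = 2 * t + 4 by omega] at he
    have hdvd : sylvester (m + 1 - t) ∣ sylvester (m + 2) - 1 :=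
      sylvester_dvd_sub_one (by omega)
    have hdvd2 : 2 * sylvester (m + 1 - t) ∣ H := by
      rw [hHdef]; exact Nat.mul_dvd_mul_left 2 hdvd
    have hdvd1 : sylvester (m + 1 - t) ∣ H := dvd_trans (dvd_mul_left _ 2) hdvd2
    rw [ho, he]
    have c1 : H / (2 * sylvester (m + 1 - t)) * (2 * sylvester (m + 1 - t)) = H :=
      Nat.div_mul_cancel hdvd2
    have c2 : H / sylvester (m + 1 - t) * sylvester (m + 1 - t) = H :=
      Nat.div_mul_cancel hdvd1
    calc H / (2 * sylvester (m + 1 - t)) * (H / sylvester (m + 1 - t))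
          * (2 * sylvester (m + 1 - t) ^ 2)
        = (H / (2 * sylvester (m + 1 - t)) * (2 * sylvester (m + 1 - t)))
          * (H / sylvester (m + 1 - t) * sylvester (m + 1 - t)) := by ring
      _ = H ^ 2 := by rw [c1, c2]; ring
  -- the big product
  have hsplit : (∏ j ∈ Finset.range (2 * m + 5 + 1), a j)
      = (∏ t ∈ Finset.range m, (a (2 * t + 3) * a (2 * t + 4)))
        * (a (2 * m + 3) * a (2 * m + 4) * a (2 * m + 5)) := by
    rw [show 2 * m + 5 + 1 = (2 * m + 3) + 1 + 1 + 1 by ring,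
      Finset.prod_range_succ, Finset.prod_range_succ, Finset.prod_range_succ,
      show 2 * m + 3 = 3 + 2 * m by ring, Finset.prod_range_add,
      prod_range_two_mul (fun j => a (3 + j)) m]
    have h3 : (∏ j ∈ Finset.range 3, a j) = 1 := by
      rw [Finset.prod_range_succ, Finset.prod_range_succ, Finset.prod_range_succ,
        ha012 0 (by omega), ha012 1 (by omega), ha012 2 (by omega)]
      simp
    rw [h3]
    have : (∏ t ∈ Finset.range m, (a (3 + 2 * t) * a (3 + (2 * t + 1))))
        = ∏ t ∈ Finset.range m, (a (2 * t + 3) * a (2 * t + 4)) := by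
      refine Finset.prod_congr rfl fun t _ => ?_
      rw [show 3 + 2 * t = 2 * t + 3 by ring, show 3 + (2 * t + 1) = 2 * t + 4 by ring]
    rw [this, show 3 + 2 * m = 2 * m + 3 by ring]
    ring
  -- key identity: T * (2^m * P^2 * 72) = H^(2m+3)
  have hA : (∏ t ∈ Finset.range m, (a (2 * t + 3) * a (2 * t + 4)))
      * (2 ^ m * P ^ 2) = H ^ (2 * m) := by
    have hrefl : (∏ t ∈ Finset.range m, sylvester (m + 1 - t)) = P := by
      rw [hPdef, ← Finset.prod_range_reflect (fun t => sylvester (t + 2)) m]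
      exact Finset.prod_congr rfl fun t ht => by
        have := Finset.mem_range.1 ht
        congr 1
        omega
    have : (∏ t ∈ Finset.range m,
        (a (2 * t + 3) * a (2 * t + 4) * (2 * sylvester (m + 1 - t) ^ 2)))
        = H ^ (2 * m) := by
      rw [Finset.prod_congr rfl fun t ht => pairval t (Finset.mem_range.1 ht)]
      rw [Finset.prod_const, Finset.card_range, ← pow_mul, Nat.mul_comm]
    rw [← this]
    conv_rhs => rw [Finset.prod_mul_distrib]
    congr 1
    rw [Finset.prod_mul_distrib, Finset.prod_const, Finset.card_range]
    congr 1
    rw [← hrefl, ← Finset.prod_pow]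
  have hB : a (2 * m + 3) * a (2 * m + 4) * a (2 * m + 5) * 72 = H ^ 3 := by
    have h12 : (12 : ℕ) ∣ H := by rw [hH12]; exact ⟨P, rfl⟩
    have d6 : (6 : ℕ) ∣ H := dvd_trans (by norm_num) h12
    have d4 : (4 : ℕ) ∣ H := dvd_trans (by norm_num) h12
    have d3 : (3 : ℕ) ∣ H := dvd_trans (by norm_num) h12
    rw [han2, han1, han]
    have c6 := Nat.div_mul_cancel d6
    have c4 := Nat.div_mul_cancel d4
    have c3 := Nat.div_mul_cancel d3
    calc H / 6 * (H / 4) * (H / 3) * 72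
        = (H / 6 * 6) * (H / 4 * 4) * (H / 3 * 3) := by ring
      _ = H ^ 3 := by rw [c6, c4, c3]; ring
  have hkey : (∏ j ∈ Finset.range (2 * m + 5 + 1), a j) * (2 ^ m * P ^ 2 * 72)
      = H ^ (2 * m + 3) := by
    rw [hsplit]
    calc (∏ t ∈ Finset.range m, (a (2 * t + 3) * a (2 * t + 4)))
          * (a (2 * m + 3) * a (2 * m + 4) * a (2 * m + 5)) * (2 ^ m * P ^ 2 * 72)
        = ((∏ t ∈ Finset.range m, (a (2 * t + 3) * a (2 * t + 4))) * (2 ^ m * P ^ 2))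
          * (a (2 * m + 3) * a (2 * m + 4) * a (2 * m + 5) * 72) := by ring
      _ = H ^ (2 * m) * H ^ 3 := by rw [hA, hB]
      _ = H ^ (2 * m + 3) := by rw [← pow_add]
  have hTpos : 0 < ∏ j ∈ Finset.range (2 * m + 5 + 1), a j := by
    rcases Nat.eq_zero_or_pos (∏ j ∈ Finset.range (2 * m + 5 + 1), a j) with h0 | h0
    · exfalso
      rw [h0, Nat.zero_mul] at hkey
      have : 0 < H ^ (2 * m + 3) := pow_pos hHpos _
      omega
    · exact h0
  have hdiv : H ^ (2 * m + 5) / (∏ j ∈ Finset.range (2 * m + 5 + 1), a j)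
      = 2 ^ m * P ^ 2 * 72 * H ^ 2 := by
    have : H ^ (2 * m + 5)
        = (∏ j ∈ Finset.range (2 * m + 5 + 1), a j) * (2 ^ m * P ^ 2 * 72 * H ^ 2) := by
      rw [show (∏ j ∈ Finset.range (2 * m + 5 + 1), a j) * (2 ^ m * P ^ 2 * 72 * H ^ 2)
        = ((∏ j ∈ Finset.range (2 * m + 5 + 1), a j) * (2 ^ m * P ^ 2 * 72)) * H ^ 2 by ring,
        hkey, ← pow_add]
    rw [this, Nat.mul_div_cancel_left _ hTpos]
  rw [hdiv]
  rw [show (2 * m + 5 + 1) / 2 = m + 3 by omega, show (2 * m + 5 - 1) / 2 = m + 2 by omega]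
  rw [hP, hH12]
  ring
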